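/- Let Γ be a finite simple graph with labeled edges satisfying condition (O). Suppose the vertex set of Γ is partitioned as V₁ ⊔ V₂, and let E₀ be a set of edges of Γ, each having label greater than 2 and each joining a vertex of V₁ to a vertex of V₂. Then the spanning subgraph of Γ with edge set E₀ is acyclic (a forest). -/

import Mathlib

/-- Condition (O): every closed reduced walk all of whose edges have labels `> 2`
has odd length. -/
def ConditionO {V : Type*} (Γ : SimpleGraph V) (label : V → V → ℕ) : Prop :=
  ∀ (v : V) (w : Γ.Walk v v), 0 < w.length →
    List.Chain' (fun d d' : Γ.Dart => d' ≠ d.symm) w.darts →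
    (∀ d ∈ w.darts, 2 < label d.toProd.1 d.toProd.2) →
    Odd w.length

private lemma parity_aux {V : Type} {G : SimpleGraph V} (p : V → Bool) :
    ∀ {u v : V} (w : G.Walk u v),
      (∀ d ∈ w.darts, p d.toProd.1 ≠ p d.toProd.2) →
      (Even w.length ↔ p u = p v) := by
  intro u v w
  induction w with
  | nil => simp
  | cons h q ih =>
    intro hd
    rw [SimpleGraph.Walk.darts_cons] at hd
    have h1 := hd _ List.mem_cons_self
    have h2 := ih (fun d hdm => hd d (List.mem_cons_of_mem _ hdm))
    simp only [SimpleGraph.Walk.length_cons, Nat.even_add_one, h2]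
    exact (by decide : ∀ a b c : Bool, a ≠ b → (¬(b = c) ↔ a = c)) _ _ _ h1

/-- If `Γ` satisfies condition (O), its vertex set is partitioned into
`V₁ ⊔ V₂` (recorded by `p : V → Bool`), and `E₀` is a set of edges of `Γ` with labels `> 2`
each joining `V₁` to `V₂`, then the spanning subgraph with edge set `E₀` is a forest. -/
theorem statement12 {V : Type} [Fintype V] (Γ : SimpleGraph V) (label : V → V → ℕ)
    (hO : ConditionO Γ label)
    (p : V → Bool) (E₀ : Set (Sym2 V)) (hE : E₀ ⊆ Γ.edgeSet)
    (hlabel : ∀ u v : V, s(u, v) ∈ E₀ → 2 < label u v)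
    (hcross : ∀ u v : V, s(u, v) ∈ E₀ → p u ≠ p v) :
    (SimpleGraph.fromEdgeSet E₀).IsAcyclic := by
  intro v c hc
  have hle : SimpleGraph.fromEdgeSet E₀ ≤ Γ := by
    intro a b hab
    rw [SimpleGraph.fromEdgeSet_adj] at hab
    exact (Γ.mem_edgeSet).mp (hE hab.1)
  have hdart : ∀ d ∈ c.darts, s(d.toProd.1, d.toProd.2) ∈ E₀ := by
    intro d _
    have := d.adj
    rw [SimpleGraph.fromEdgeSet_adj] at this
    exact this.1
  have heven : Even c.length :=
    (parity_aux p c (fun d hd => hcross _ _ (hdart d hd))).mpr rfl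
  set w : Γ.Walk v v := c.mapLe hle with hw_def
  have hw : w.IsCycle := hc.mapLe hle
  have hlen : w.length = c.length := by rw [hw_def]; exact SimpleGraph.Walk.length_map _ c
  have hpos : 0 < w.length := by
    have := hc.three_le_length; omega
  have hdarts_eq : w.darts = c.darts.map (SimpleGraph.Hom.ofLE hle).mapDart := by
    rw [hw_def]; exact SimpleGraph.Walk.darts_map _ c
  have hchain : List.Chain' (fun d d' : Γ.Dart => d' ≠ d.symm) w.darts := by
    have hnd : w.edges.Nodup := hw.edges_nodup
    have hpw : List.Pairwise (fun a b : Γ.Dart => a.edge ≠ b.edge) w.darts := by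
      have h' : (w.darts.map SimpleGraph.Dart.edge).Nodup := hnd
      rwa [List.Nodup, List.pairwise_map] at h'
    exact (hpw.imp fun {a b} h hb => h (by rw [hb, SimpleGraph.Dart.edge_symm])).isChain
  have hlab : ∀ d ∈ w.darts, 2 < label d.toProd.1 d.toProd.2 := by
    intro d hd
    rw [hdarts_eq, List.mem_map] at hd
    obtain ⟨d', hd', rfl⟩ := hd
    exact hlabel _ _ (hdart d' hd')
  have hodd := hO v w hpos hchain hlab
  rw [hlen] at hodd
  exact (Nat.not_odd_iff_even.mpr heven) hodd
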